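/- arXiv:2104.13707 — 2 statements merged into one kernel-verified Lean document; each statement's English description precedes it below -/
import Mathlib

section
/- For positive definite Hermitian matrices Φ₀, Φ₁ and positive definite Hermitian weight Ω, the matrix U_Ω := Φ₁^{-1/2} Ω^{-1} Φ₀^{-1/2} (Φ₀^{1/2} Ω Φ₁ Ω Φ₀^{1/2})^{1/2} satisfies U_Ω U_Ω* = I. -/
open Matrix
open scoped ComplexOrder
set_option maxHeartbeats 1000000
noncomputable def Matrix.PosSemidef.sqrt {n 𝕜 : Type*} [Fintype n] [DecidableEq n] [RCLike 𝕜]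
    {A : Matrix n n 𝕜} (hA : A.PosSemidef) : Matrix n n 𝕜 :=
  hA.1.eigenvectorUnitary.1 * diagonal ((↑) ∘ (√·) ∘ hA.1.eigenvalues) *
  (star hA.1.eigenvectorUnitary : Matrix n n 𝕜)

lemma Matrix.PosSemidef.posSemidef_sqrt {n 𝕜 : Type*} [Fintype n] [DecidableEq n] [RCLike 𝕜]
    {A : Matrix n n 𝕜} (hA : A.PosSemidef) : hA.sqrt.PosSemidef := by
  have hD : (diagonal ((↑) ∘ (√·) ∘ hA.1.eigenvalues) : Matrix n n 𝕜).PosSemidef := by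
    rw [posSemidef_diagonal_iff]
    intro i
    simp only [Function.comp_apply, RCLike.ofReal_nonneg]
    exact Real.sqrt_nonneg _
  exact hD.mul_mul_conjTranspose_same hA.1.eigenvectorUnitary.1

lemma Matrix.PosSemidef.sqrt_mul_self {n 𝕜 : Type*} [Fintype n] [DecidableEq n] [RCLike 𝕜]
    {A : Matrix n n 𝕜} (hA : A.PosSemidef) : hA.sqrt * hA.sqrt = A := by
  have hU : (star hA.1.eigenvectorUnitary : Matrix n n 𝕜) * hA.1.eigenvectorUnitary.1 = 1 := by
    simp
  have hD : (diagonal ((↑) ∘ (√·) ∘ hA.1.eigenvalues) : Matrix n n 𝕜) *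
      diagonal ((↑) ∘ (√·) ∘ hA.1.eigenvalues) = diagonal (RCLike.ofReal ∘ hA.1.eigenvalues) := by
    rw [diagonal_mul_diagonal]
    congr 1
    funext i
    simp only [Function.comp_apply]
    rw [← RCLike.ofReal_mul, Real.mul_self_sqrt (hA.eigenvalues_nonneg i)]
  conv_rhs => rw [hA.1.spectral_theorem, Unitary.conjStarAlgAut_apply]
  simp only [Matrix.PosSemidef.sqrt, Matrix.mul_assoc]
  rw [← Matrix.mul_assoc (star hA.1.eigenvectorUnitary : Matrix n n 𝕜) hA.1.eigenvectorUnitary.1, hU,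
    Matrix.one_mul, ← Matrix.mul_assoc (diagonal _) (diagonal _), hD]

theorem weighted_allpass_unitary (n : ℕ)
    (Φ₀ Φ₁ Ω : Matrix (Fin n) (Fin n) ℂ)
    (h0 : Φ₀.PosDef) (h1 : Φ₁.PosDef) (hΩ : Ω.PosDef)
    (hS : (h0.posSemidef.sqrt * Ω * Φ₁ * Ω * h0.posSemidef.sqrt).PosSemidef) :
    (h1.posSemidef.sqrt⁻¹ * Ω⁻¹ * h0.posSemidef.sqrt⁻¹ * hS.sqrt) *
      (h1.posSemidef.sqrt⁻¹ * Ω⁻¹ * h0.posSemidef.sqrt⁻¹ * hS.sqrt)ᴴ = 1 := by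
  set a := h0.posSemidef.sqrt with ha
  set b := h1.posSemidef.sqrt with hb
  set s := hS.sqrt with hs
  have haH : aᴴ = a := h0.posSemidef.posSemidef_sqrt.1
  have hbH : bᴴ = b := h1.posSemidef.posSemidef_sqrt.1
  have hsH : sᴴ = s := hS.posSemidef_sqrt.1
  have hΩH : Ωᴴ = Ω := hΩ.1
  have haa : a * a = Φ₀ := h0.posSemidef.sqrt_mul_self
  have hbb : b * b = Φ₁ := h1.posSemidef.sqrt_mul_self
  have hss : s * s = a * Ω * Φ₁ * Ω * a := hS.sqrt_mul_self
  have haU : IsUnit a := by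
    rw [Matrix.isUnit_iff_isUnit_det]
    have hd : a.det * a.det = Φ₀.det := by rw [← Matrix.det_mul, haa]
    have h0d : Φ₀.det ≠ 0 := h0.det_pos.ne'
    exact isUnit_iff_ne_zero.mpr (fun h => h0d (by rw [← hd, h, mul_zero]))
  have hbU : IsUnit b := by
    rw [Matrix.isUnit_iff_isUnit_det]
    have hd : b.det * b.det = Φ₁.det := by rw [← Matrix.det_mul, hbb]
    have h1d : Φ₁.det ≠ 0 := h1.det_pos.ne'
    exact isUnit_iff_ne_zero.mpr (fun h => h1d (by rw [← hd, h, mul_zero]))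
  have hΩU : IsUnit Ω := hΩ.isUnit
  haveI := haU.invertible
  haveI := hbU.invertible
  haveI := hΩU.invertible
  have key : (b⁻¹ * Ω⁻¹ * a⁻¹ * s) * (b⁻¹ * Ω⁻¹ * a⁻¹ * s)ᴴ
      = b⁻¹ * (Ω⁻¹ * (a⁻¹ * ((s * s) * (a⁻¹ * (Ω⁻¹ * b⁻¹))))) := by
    rw [conjTranspose_mul, conjTranspose_mul, conjTranspose_mul, hsH,
        conjTranspose_nonsing_inv, conjTranspose_nonsing_inv, conjTranspose_nonsing_inv,
        haH, hbH, hΩH]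
    simp only [Matrix.mul_assoc]
  rw [key, hss, ← hbb]
  simp only [Matrix.mul_assoc]
  rw [Matrix.inv_mul_cancel_left_of_invertible,
      Matrix.mul_inv_cancel_left_of_invertible,
      Matrix.inv_mul_cancel_left_of_invertible,
      Matrix.mul_inv_cancel_left_of_invertible,
      Matrix.mul_nonsing_inv _ (Matrix.isUnit_iff_isUnit_det _ |>.1 hbU),
      Matrix.mul_one,
      Matrix.nonsing_inv_mul _ (Matrix.isUnit_iff_isUnit_det _ |>.1 hbU)]
end

section
/- For positive semidefinite Hermitian matrices A, B and a complex matrix C such that the block matrix [[A, C],[C*, B]] is positive semidefinite, one has Re(tr C) ≤ tr((B^{1/2} A B^{1/2})^{1/2}). -/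
open Matrix
open scoped ComplexOrder

variable {d : Type*} [Fintype d] [DecidableEq d] {H : Matrix d d ℂ}

lemma star_mul_self_unit (hH : H.IsHermitian) :
    (star (hH.eigenvectorUnitary : Matrix d d ℂ)) * (hH.eigenvectorUnitary : Matrix d d ℂ) = 1 :=
  Unitary.star_mul_self_of_mem (SetLike.coe_mem _)

lemma mul_star_self_unit (hH : H.IsHermitian) :
    (hH.eigenvectorUnitary : Matrix d d ℂ) * (star (hH.eigenvectorUnitary : Matrix d d ℂ)) = 1 :=
  Unitary.mul_star_self_of_mem (SetLike.coe_mem _)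

lemma mcfc_mul (hH : H.IsHermitian) (f g : ℝ → ℝ) :
    hH.cfc f * hH.cfc g = hH.cfc (fun x => f x * g x) := by
  unfold Matrix.IsHermitian.cfc
  simp only [Unitary.conjStarAlgAut_apply]
  have h2 : ∀ (a b c e f g : Matrix d d ℂ), a * b * c * (e * f * g) =
      a * (b * ((c * e) * f)) * g := fun _ _ _ _ _ _ => by
    simp only [mul_assoc]
  rw [h2, star_mul_self_unit hH, one_mul, diagonal_mul_diagonal]
  congr 2
  rw [diagonal_eq_diagonal_iff]
  intro i
  simp

lemma mcfc_conjTranspose (hH : H.IsHermitian) (f : ℝ → ℝ) :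
    (hH.cfc f)ᴴ = hH.cfc f := by
  unfold Matrix.IsHermitian.cfc
  simp only [Unitary.conjStarAlgAut_apply]
  have h3 : (diagonal (RCLike.ofReal ∘ f ∘ hH.eigenvalues) : Matrix d d ℂ)ᴴ
      = diagonal (RCLike.ofReal ∘ f ∘ hH.eigenvalues) := by
    rw [diagonal_conjTranspose, diagonal_eq_diagonal_iff]
    intro i
    simp [Pi.star_def]
  simp only [conjTranspose_mul, conjTranspose_conjTranspose, star_eq_conjTranspose, h3, mul_assoc]

lemma mcfc_herm (hH : H.IsHermitian) (f : ℝ → ℝ) : (hH.cfc f).IsHermitian :=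
  mcfc_conjTranspose hH f

lemma mcfc_congr (hH : H.IsHermitian) {f g : ℝ → ℝ}
    (h : ∀ i, f (hH.eigenvalues i) = g (hH.eigenvalues i)) : hH.cfc f = hH.cfc g := by
  unfold Matrix.IsHermitian.cfc
  simp only [Unitary.conjStarAlgAut_apply]
  congr 2
  rw [diagonal_eq_diagonal_iff]
  intro i
  simp [h i]

lemma mcfc_id (hH : H.IsHermitian) : hH.cfc (fun x => x) = H := by
  conv_rhs => rw [hH.spectral_theorem]
  rfl

lemma mcfc_one (hH : H.IsHermitian) : hH.cfc (fun _ => 1) = 1 := by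
  unfold Matrix.IsHermitian.cfc
  simp only [Unitary.conjStarAlgAut_apply]
  have h3 : (diagonal (RCLike.ofReal ∘ (fun _ => (1:ℝ)) ∘ hH.eigenvalues) : Matrix d d ℂ) = 1 := by
    have : (RCLike.ofReal ∘ (fun _ => (1:ℝ)) ∘ hH.eigenvalues : d → ℂ) = fun _ => 1 := by
      funext i; simp
    rw [this, diagonal_one]
  rw [h3, mul_one, mul_star_self_unit hH]

lemma mcfc_zero (hH : H.IsHermitian) : hH.cfc (fun _ => 0) = 0 := by
  unfold Matrix.IsHermitian.cfc
  simp only [Unitary.conjStarAlgAut_apply]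
  have h3 : (diagonal (RCLike.ofReal ∘ (fun _ => (0:ℝ)) ∘ hH.eigenvalues) : Matrix d d ℂ) = 0 := by
    have : (RCLike.ofReal ∘ (fun _ => (0:ℝ)) ∘ hH.eigenvalues : d → ℂ) = fun _ => 0 := by
      funext i; simp
    rw [this, diagonal_zero]
  rw [h3, mul_zero, zero_mul]

lemma mcfc_add (hH : H.IsHermitian) (f g : ℝ → ℝ) :
    hH.cfc f + hH.cfc g = hH.cfc (fun x => f x + g x) := by
  unfold Matrix.IsHermitian.cfc
  simp only [Unitary.conjStarAlgAut_apply]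
  rw [← Matrix.add_mul, ← Matrix.mul_add, diagonal_add]
  congr 2
  rw [diagonal_eq_diagonal_iff]
  intro i
  simp

lemma mcfc_trace_re (hH : H.IsHermitian) (f : ℝ → ℝ) :
    (hH.cfc f).trace.re = ∑ i, f (hH.eigenvalues i) := by
  unfold Matrix.IsHermitian.cfc
  simp only [Unitary.conjStarAlgAut_apply]
  rw [Matrix.trace_mul_cycle, star_mul_self_unit hH, one_mul, trace_diagonal]
  simp

lemma mcfc_posSemidef (hH : H.IsHermitian) {f : ℝ → ℝ}
    (h : ∀ i, 0 ≤ f (hH.eigenvalues i)) : (hH.cfc f).PosSemidef := by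
  have key : hH.cfc f = (hH.cfc (fun x => Real.sqrt (f x)))ᴴ *
      (hH.cfc (fun x => Real.sqrt (f x))) := by
    rw [mcfc_conjTranspose, mcfc_mul]
    exact (mcfc_congr hH (f := fun x => Real.sqrt (f x) * Real.sqrt (f x)) (g := f)
      (fun i => Real.mul_self_sqrt (h i))).symm
  rw [key]
  exact Matrix.posSemidef_conjTranspose_mul_self _

lemma sqrt_eq_cfc {H : Matrix d d ℂ} (hH : H.PosSemidef) : hH.sqrt = hH.1.cfc Real.sqrt := rfl

lemma psd_trace_re_nonneg {K : Matrix d d ℂ} (hK : K.PosSemidef) : 0 ≤ K.trace.re := by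
  have h : ∀ i, 0 ≤ (K i i).re := by
    intro i
    have := hK.dotProduct_mulVec_nonneg (Pi.single i 1)
    have h2 : dotProduct (star (Pi.single i 1)) (K *ᵥ (Pi.single i 1)) = K i i := by
      simp [dotProduct, mulVec, Pi.single_apply]
    rw [h2] at this
    exact (Complex.le_def.mp this).1
  rw [Matrix.trace]
  simpa using Finset.sum_nonneg fun i _ => h i

lemma scalar_aux {a c : ℝ} (ha : 0 ≤ a) (h : ∀ t : ℝ, 0 < t → 0 ≤ t ^ 2 * a - 2 * t * c) :
    c ≤ 0 := by
  by_contra hc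
  push_neg at hc
  have ht : (0:ℝ) < c / (a + 1) := by positivity
  have := h _ ht
  have ha1 : (0:ℝ) < a + 1 := by linarith
  have key : 0 ≤ (c ^ 2 * a - (a + 1) * (2 * c * c)) / (a + 1) ^ 2 := by
    have heq : ((c / (a + 1)) ^ 2 * a - 2 * (c / (a + 1)) * c)
        = (c ^ 2 * a - (a + 1) * (2 * c * c)) / (a + 1) ^ 2 := by
      field_simp
    linarith [heq ▸ this]
  rw [le_div_iff₀ (by positivity)] at key
  nlinarith [mul_pos hc hc]

lemma kernel_lemma {A B C : Matrix d d ℂ} (hA : A.PosSemidef)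
    (hblock : (fromBlocks A C Cᴴ B).PosSemidef) :
    ∀ v : d → ℂ, B *ᵥ v = 0 → C *ᵥ v = 0 := by
  intro v hv
  set u : d → ℂ := C *ᵥ v with hu
  have key : ∀ t : ℝ, 0 < t →
      0 ≤ (t:ℂ) ^ 2 * (star u ⬝ᵥ (A *ᵥ u)) - 2 * t * (star u ⬝ᵥ u) := by
    intro t _
    have hcross : ∀ x : d → ℂ, star v ⬝ᵥ (Cᴴ *ᵥ x) = star u ⬝ᵥ x := by
      intro x
      rw [dotProduct_mulVec, hu, star_mulVec]
    have h := hblock.dotProduct_mulVec_nonneg (Sum.elim (-(t:ℂ) • u) v)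
    simp only [fromBlocks_mulVec, Function.star_sumElim, Sum.elim_comp_inl, Sum.elim_comp_inr,
      sumElim_dotProduct_sumElim, dotProduct_add, hv, dotProduct_zero, add_zero, mulVec_smul,
      star_smul, smul_dotProduct, dotProduct_smul, smul_eq_mul, star_neg, hcross,
      RCLike.star_def, Complex.conj_ofReal] at h
    convert h using 1
    ring
  have ha : (0:ℂ) ≤ star u ⬝ᵥ (A *ᵥ u) := hA.dotProduct_mulVec_nonneg u
  have hc : (0:ℂ) ≤ star u ⬝ᵥ u := dotProduct_star_self_nonneg u
  have hre : ∀ t : ℝ, 0 < t →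
      0 ≤ t ^ 2 * (star u ⬝ᵥ (A *ᵥ u)).re - 2 * t * (star u ⬝ᵥ u).re := by
    intro t ht
    have := (Complex.le_def.mp (key t ht)).1
    simpa [Complex.sub_re, Complex.mul_re, ← Complex.ofReal_pow, Complex.ofReal_re,
      Complex.ofReal_im] using this
  have hc0 : (star u ⬝ᵥ u).re ≤ 0 := scalar_aux (Complex.nonneg_iff.mp ha).1 hre
  have : star u ⬝ᵥ u = 0 := by
    have h1 := Complex.nonneg_iff.mp hc
    exact Complex.ext (le_antisymm hc0 h1.1) (h1.2.symm)
  exact dotProduct_star_self_eq_zero.mp this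

lemma master_ineq {A B C : Matrix d d ℂ}
    (hblock : (fromBlocks A C Cᴴ B).PosSemidef) (X Y : Matrix d d ℂ) :
    0 ≤ (Xᴴ * A * X).trace.re + 2 * (Xᴴ * C * Y).trace.re + (Yᴴ * B * Y).trace.re := by
  have hK := hblock.conjTranspose_mul_mul_same (fromRows X Y)
  rw [conjTranspose_fromRows_eq_fromCols_conjTranspose, Matrix.mul_assoc,
    fromBlocks_mul_fromRows, fromCols_mul_fromRows] at hK
  have h := psd_trace_re_nonneg hK
  have hconj : (Yᴴ * (Cᴴ * X)).trace = star ((Xᴴ * (C * Y)).trace) := by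
    rw [← trace_conjTranspose]
    congr 1
    simp [conjTranspose_mul, mul_assoc]
  rw [Matrix.mul_add, Matrix.mul_add, trace_add, trace_add, trace_add, hconj] at h
  simp only [Complex.add_re, Complex.star_def, Complex.conj_re] at h
  have e1 : (Xᴴ * A * X).trace = (Xᴴ * (A * X)).trace := by rw [Matrix.mul_assoc]
  have e2 : (Xᴴ * C * Y).trace = (Xᴴ * (C * Y)).trace := by rw [Matrix.mul_assoc]
  have e3 : (Yᴴ * B * Y).trace = (Yᴴ * (B * Y)).trace := by rw [Matrix.mul_assoc]
  rw [e1, e2, e3]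
  linarith

lemma sqrt_add_le (μ δ : ℝ) (hμ : 0 ≤ μ) (hδ : 0 ≤ δ) :
    Real.sqrt (μ + δ) ≤ Real.sqrt μ + Real.sqrt δ := by
  have h1 : μ + δ ≤ (Real.sqrt μ + Real.sqrt δ) ^ 2 := by
    nlinarith [Real.sq_sqrt hμ, Real.sq_sqrt hδ, Real.sqrt_nonneg μ, Real.sqrt_nonneg δ,
      mul_nonneg (Real.sqrt_nonneg μ) (Real.sqrt_nonneg δ)]
  calc Real.sqrt (μ + δ) ≤ Real.sqrt ((Real.sqrt μ + Real.sqrt δ) ^ 2) := Real.sqrt_le_sqrt h1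
  _ = Real.sqrt μ + Real.sqrt δ := Real.sqrt_sq (by positivity)

theorem cross_trace_bound (n : ℕ)
    (A B C : Matrix (Fin n) (Fin n) ℂ) (hA : A.PosSemidef) (hB : B.PosSemidef)
    (hS : (hB.sqrt * A * hB.sqrt).PosSemidef)
    (hblock : (Matrix.fromBlocks A C Cᴴ B).PosSemidef) :
    C.trace.re ≤ hS.sqrt.trace.re := by
  classical
  set T : Matrix (Fin n) (Fin n) ℂ := hB.sqrt with hTdef
  have hBH : B.IsHermitian := hB.1
  have hT : T.PosSemidef := mcfc_posSemidef hBH fun i => Real.sqrt_nonneg _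
  have hTcfc : T = hBH.cfc Real.sqrt := rfl
  have hM : (T * A * T).IsHermitian := hS.1
  have hMev : ∀ i, 0 ≤ hM.eigenvalues i := hS.eigenvalues_nonneg
  have hBev : ∀ i, 0 ≤ hBH.eigenvalues i := hB.eigenvalues_nonneg
  have hScfc : hS.sqrt = hM.cfc Real.sqrt := rfl
  -- projection machinery for B
  set g : ℝ → ℝ := fun b => if b = 0 then 0 else (Real.sqrt b)⁻¹ with hgdef
  set Tdag : Matrix (Fin n) (Fin n) ℂ := hBH.cfc g with hTdagdef
  set P : Matrix (Fin n) (Fin n) ℂ := hBH.cfc (fun b => if b = 0 then 0 else 1) with hPdef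
  set Q : Matrix (Fin n) (Fin n) ℂ := hBH.cfc (fun b => if b = 0 then 1 else 0) with hQdef
  have hPQ : P + Q = 1 := by
    rw [hPdef, hQdef, mcfc_add]
    rw [show (fun x : ℝ => (if x = 0 then (0:ℝ) else 1) + (if x = 0 then 1 else 0))
      = fun _ => 1 from funext fun x => by split <;> norm_num]
    exact mcfc_one hBH
  have hBQ : B * Q = 0 := by
    conv_lhs => rw [show B = hBH.cfc (fun x => x) from (mcfc_id hBH).symm]
    rw [hQdef, mcfc_mul]
    rw [show (fun x : ℝ => x * (if x = 0 then 1 else 0)) = fun _ => 0 from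
      funext fun x => by split <;> simp_all]
    exact mcfc_zero hBH
  have hCQ : C * Q = 0 := by
    ext i j
    have hv : B *ᵥ (fun k => Q k j) = 0 := by
      funext i'
      have : (B * Q) i' j = 0 := by rw [hBQ]; rfl
      simpa [Matrix.mul_apply, Matrix.mulVec, dotProduct] using this
    have := kernel_lemma hA hblock (fun k => Q k j) hv
    have h2 : (C * Q) i j = (C *ᵥ (fun k => Q k j)) i := by
      simp [Matrix.mul_apply, Matrix.mulVec, dotProduct]
    rw [h2, this]
    rfl
  have hTdagT : Tdag * T = P := by
    rw [hTdagdef, hTcfc, mcfc_mul, hPdef]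
    exact mcfc_congr hBH fun i => by
      by_cases h : hBH.eigenvalues i = 0
      · simp [hgdef, h]
      · have hpos : 0 < hBH.eigenvalues i := lt_of_le_of_ne (hBev i) (Ne.symm h)
        simp only [hgdef, if_neg h]
        rw [inv_mul_cancel₀ (ne_of_gt (Real.sqrt_pos.mpr hpos))]
  have hTdagBTdag : Tdag * B * Tdag = P := by
    conv_lhs => rw [show B = hBH.cfc (fun x => x) from (mcfc_id hBH).symm]
    rw [hTdagdef, mcfc_mul, mcfc_mul, hPdef]
    exact mcfc_congr hBH fun i => by
      by_cases h : hBH.eigenvalues i = 0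
      · simp [hgdef, h]
      · have hpos : 0 < hBH.eigenvalues i := lt_of_le_of_ne (hBev i) (Ne.symm h)
        have hs := Real.sqrt_pos.mpr hpos
        simp only [hgdef, if_neg h]
        have hq := Real.mul_self_sqrt (le_of_lt hpos)
        field_simp
        rw [Real.sq_sqrt hpos.le]
  have htraceTC : (T * C * Tdag).trace = C.trace := by
    rw [Matrix.trace_mul_cycle, hTdagT, Matrix.trace_mul_comm]
    have : C * P = C := by
      have : C * (P + Q) = C := by rw [hPQ, Matrix.mul_one]
      rw [Matrix.mul_add, hCQ, add_zero] at this
      exact this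
    rw [this]
  -- now the δ-dependent estimate
  have main : ∀ δ : ℝ, 0 < δ →
      2 * C.trace.re ≤ 2 * hS.sqrt.trace.re + (Fintype.card (Fin n)) * Real.sqrt δ := by
    intro δ hδ
    set q : ℝ → ℝ := fun μ => Real.sqrt (Real.sqrt (μ + δ)) with hqdef
    set qi : ℝ → ℝ := fun μ => (q μ)⁻¹ with hqidef
    have hqpos : ∀ μ : ℝ, 0 ≤ μ → 0 < q μ := fun μ hμ => by
      rw [hqdef]
      have : 0 < μ + δ := by linarith
      positivity
    set X₀ : Matrix (Fin n) (Fin n) ℂ := T * hM.cfc qi with hX0def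
    set Y : Matrix (Fin n) (Fin n) ℂ := Tdag * hM.cfc q with hYdef
    have hX0H : X₀ᴴ = hM.cfc qi * T := by
      rw [hX0def, conjTranspose_mul, mcfc_conjTranspose, hT.1]
    have hYH : Yᴴ = hM.cfc q * Tdag := by
      rw [hYdef, conjTranspose_mul, mcfc_conjTranspose, mcfc_conjTranspose]
    -- term 1
    have hterm1 : (X₀ᴴ * A * X₀).trace.re ≤ hS.sqrt.trace.re := by
      have e : X₀ᴴ * A * X₀ = hM.cfc (fun μ => qi μ * μ * qi μ) := by
        rw [hX0H, hX0def]
        have h1 : hM.cfc qi * T * A * (T * hM.cfc qi)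
            = hM.cfc qi * (T * A * T) * hM.cfc qi := by
          simp only [Matrix.mul_assoc]
        have h2 : hM.cfc qi * (T * A * T) * hM.cfc qi
            = hM.cfc qi * hM.cfc (fun x => x) * hM.cfc qi :=
          congrArg (fun Z => hM.cfc qi * Z * hM.cfc qi) (mcfc_id hM).symm
        rw [h1, h2, mcfc_mul, mcfc_mul]
      rw [e, hScfc, mcfc_trace_re, mcfc_trace_re]
      apply Finset.sum_le_sum
      intro i _
      set μ := hM.eigenvalues i
      have hμ : 0 ≤ μ := hMev i
      have hq := hqpos μ hμ
      have hqq : q μ * q μ = Real.sqrt (μ + δ) := Real.mul_self_sqrt (by positivity)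
      have hδμ : (0:ℝ) < Real.sqrt (μ + δ) := by
        have : (0:ℝ) < μ + δ := by linarith
        exact Real.sqrt_pos.mpr this
      have e2 : qi μ * μ * qi μ = μ / Real.sqrt (μ + δ) := by
        rw [hqidef, ← hqq, div_eq_mul_inv, mul_inv]
        ring
      rw [e2, div_le_iff₀ hδμ]
      have h3 : Real.sqrt μ * Real.sqrt (μ + δ) = Real.sqrt (μ * (μ + δ)) :=
        (Real.sqrt_mul hμ _).symm
      have h4 : Real.sqrt (μ * μ) ≤ Real.sqrt (μ * (μ + δ)) :=
        Real.sqrt_le_sqrt (by nlinarith)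
      rw [Real.sqrt_mul_self hμ] at h4
      linarith [h3 ▸ h4]
    -- term 3
    have hterm3 : (Yᴴ * B * Y).trace.re ≤ hS.sqrt.trace.re + (Fintype.card (Fin n)) * Real.sqrt δ := by
      have e : Yᴴ * B * Y = hM.cfc q * P * hM.cfc q := by
        rw [hYH, hYdef]
        have : hM.cfc q * Tdag * B * (Tdag * hM.cfc q)
            = hM.cfc q * (Tdag * B * Tdag) * hM.cfc q := by
          simp only [Matrix.mul_assoc]
        rw [this, hTdagBTdag]
      have hQpsd : (1 - P : Matrix (Fin n) (Fin n) ℂ).PosSemidef := by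
        have : (1 - P : Matrix (Fin n) (Fin n) ℂ) = Q := by
          rw [← hPQ]; abel
        rw [this, hQdef]
        exact mcfc_posSemidef hBH fun i => by split <;> norm_num
      have hdiff : (hM.cfc q * hM.cfc q - hM.cfc q * P * hM.cfc q).PosSemidef := by
        have e2 : hM.cfc q * hM.cfc q - hM.cfc q * P * hM.cfc q
            = (hM.cfc q)ᴴ * (1 - P) * hM.cfc q := by
          rw [mcfc_conjTranspose]
          noncomm_ring
        rw [e2]
        exact hQpsd.conjTranspose_mul_mul_same _
      have h5 := psd_trace_re_nonneg hdiff
      rw [trace_sub, Complex.sub_re] at h5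
      have hqq : (hM.cfc q * hM.cfc q).trace.re
          = ∑ i, Real.sqrt (hM.eigenvalues i + δ) := by
        rw [mcfc_mul, mcfc_trace_re]
        apply Finset.sum_congr rfl
        intro i _
        exact Real.mul_self_sqrt (by positivity)
      have hsum : ∑ i, Real.sqrt (hM.eigenvalues i + δ)
          ≤ hS.sqrt.trace.re + (Fintype.card (Fin n)) * Real.sqrt δ := by
        rw [hScfc, mcfc_trace_re]
        have : ∀ i ∈ Finset.univ, Real.sqrt (hM.eigenvalues i + δ)
            ≤ Real.sqrt (hM.eigenvalues i) + Real.sqrt δ := fun i _ =>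
          sqrt_add_le _ _ (hMev i) (le_of_lt hδ)
        calc ∑ i, Real.sqrt (hM.eigenvalues i + δ)
            ≤ ∑ i, (Real.sqrt (hM.eigenvalues i) + Real.sqrt δ) := Finset.sum_le_sum this
        _ = (∑ i, Real.sqrt (hM.eigenvalues i)) + (Fintype.card (Fin n)) * Real.sqrt δ := by
            rw [Finset.sum_add_distrib]
            simp [Finset.card_univ, nsmul_eq_mul]
      rw [hqq] at h5
      rw [e]
      linarith
    -- cross term
    have hcross : (X₀ᴴ * C * Y).trace = C.trace := by
      rw [hX0H, hYdef]
      have e : hM.cfc qi * T * C * (Tdag * hM.cfc q)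
          = (hM.cfc qi * (T * C * Tdag)) * hM.cfc q := by
        simp only [Matrix.mul_assoc]
      rw [e, Matrix.trace_mul_comm, ← Matrix.mul_assoc, mcfc_mul]
      have e2 : hM.cfc (fun x => q x * qi x) = 1 := by
        rw [← mcfc_one hM]
        apply mcfc_congr hM
        intro i
        rw [hqidef]
        exact mul_inv_cancel₀ (ne_of_gt (hqpos _ (hMev i)))
      rw [e2, Matrix.one_mul, htraceTC]
    -- combine via master inequality with X := -X₀
    have hmi := master_ineq hblock (-X₀) Y
    simp only [conjTranspose_neg, Matrix.neg_mul, Matrix.mul_neg, neg_neg, trace_neg,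
      Complex.neg_re] at hmi
    rw [hcross] at hmi
    linarith
  -- conclude
  by_contra hcon
  push_neg at hcon
  set ε : ℝ := C.trace.re - hS.sqrt.trace.re with hεdef
  have hε : 0 < ε := by linarith
  set δ : ℝ := (2 * ε / (Fintype.card (Fin n) + 1)) ^ 2 with hδdef
  have hδpos : 0 < δ := by positivity
  have hsqrtδ : Real.sqrt δ = 2 * ε / (Fintype.card (Fin n) + 1) := by
    rw [hδdef, Real.sqrt_sq (by positivity)]
  have := main δ hδpos
  rw [hsqrtδ] at this
  have hcard : (0:ℝ) ≤ (Fintype.card (Fin n) : ℝ) := Nat.cast_nonneg _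
  have hfrac : (Fintype.card (Fin n) : ℝ) * (2 * ε / (Fintype.card (Fin n) + 1)) < 2 * ε := by
    rw [mul_div_assoc']
    rw [div_lt_iff₀ (by positivity)]
    nlinarith
  linarith
end
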